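/- (Anyon–Bose expansion of the reduced density matrix, ordering $O_+$.) Let $\kappa \in \mathbb{R}$, $L>0$, $V = [-L/2, L/2]$, $N \ge n \ge 1$, and let $\chi: \mathbb{R}^N \to \mathbb{C}$ be continuous and totally symmetric. Let $x_1 < x_1' < \cdots < x_n < x_n'$ be points of $V$ and set $I_+ = [x_1,x_1'] \cup \cdots \cup [x_n,x_n']$. Define $\chi^a = A_\kappa\, \chi$ and the statistics constant $C_+ = A_{-\kappa}(x_1',\dots,x_n')\, A_\kappa(x_1,\dots,x_n)$. Then $\int_{V^{N-n}} \overline{\chi^a(z_1,\dots,z_{N-n}, x_1',\dots,x_n')}\, \chi^a(z_1,\dots,z_{N-n}, x_1,\dots,x_n)\, dz = C_+ \sum_{j=0}^{N-n} (-1)^j (1 - e^{i\pi\kappa})^j \binom{N-n}{j} \int_{I_+^{\,j}} dw \int_{V^{N-n-j}} dz\, \overline{\chi(w_1,\dots,w_j, z_1,\dots,z_{N-n-j}, x_1',\dots,x_n')}\, \chi(w_1,\dots,w_j, z_1,\dots,z_{N-n-j}, x_1,\dots,x_n)$. -/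

import Mathlib

open MeasureTheory

/-- The statistics factor `A_κ(z₁,…,z_N) = exp(iπκ ∑_{j<k} ε(z_j - z_k)/2)`. -/
noncomputable def Afac (κ : ℝ) {N : ℕ} (z : Fin N → ℝ) : ℂ :=
  Complex.exp (Complex.I * Real.pi * κ *
    (∑ j : Fin N, ∑ k ∈ Finset.univ.filter (fun k => j < k), Real.sign (z j - z k)) / 2)

noncomputable def Ssum {N : ℕ} (w : Fin N → ℝ) : ℝ :=
  ∑ j : Fin N, ∑ k ∈ Finset.univ.filter (fun k => j < k), Real.sign (w j - w k)

lemma Afac_eq (κ : ℝ) {N : ℕ} (w : Fin N → ℝ) :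
    Afac κ w = Complex.exp (Complex.I * Real.pi * κ * ((Ssum w : ℝ) : ℂ) / 2) := by
  simp [Afac, Ssum]

lemma Afac_conj (κ : ℝ) {N : ℕ} (w : Fin N → ℝ) :
    (starRingEnd ℂ) (Afac κ w) = Afac (-κ) w := by
  rw [Afac_eq, Afac_eq, ← Complex.exp_conj]
  congr 1
  simp only [map_div₀, map_mul, Complex.conj_I, Complex.conj_ofReal, map_ofNat]
  push_cast
  ring

lemma Ssum_append {m n : ℕ} (z : Fin m → ℝ) (x : Fin n → ℝ) :
    Ssum (Fin.append z x) = Ssum z + Ssum x + ∑ i : Fin m, ∑ l : Fin n, Real.sign (z i - x l) := by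
  unfold Ssum
  simp only [Finset.sum_filter, Fin.sum_univ_add, Fin.append_left, Fin.append_right,
    Fin.lt_def, Fin.coe_castAdd, Fin.coe_natAdd, Nat.add_lt_add_iff_left]
  rw [Finset.sum_add_distrib, Finset.sum_add_distrib]
  have h2 : ∀ i : Fin m, (∑ l : Fin n, if (i : ℕ) < m + (l:ℕ) then Real.sign (z i - x l) else 0)
      = ∑ l : Fin n, Real.sign (z i - x l) := by
    intro i; refine Finset.sum_congr rfl fun l _ => ?_
    rw [if_pos]; exact lt_of_lt_of_le i.isLt (Nat.le_add_right m l)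
  have h3 : (∑ l : Fin n, ∑ i' : Fin m, if m + (l:ℕ) < (i':ℕ) then Real.sign (x l - z i') else 0) = 0 := by
    refine Finset.sum_eq_zero fun l _ => Finset.sum_eq_zero fun i' _ => ?_
    rw [if_neg]; have := i'.isLt; omega
  simp only [h2, h3]
  ring

open scoped Classical in
lemma sign_sum_eq {n : ℕ} (x x' : Fin n → ℝ) (hxx' : ∀ j, x j < x' j)
    (hchain : ∀ j k : Fin n, j < k → x' j < x k) (y : ℝ)
    (hy : ∀ l, y ≠ x l ∧ y ≠ x' l) :
    ∑ l : Fin n, (Real.sign (y - x l) - Real.sign (y - x' l))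
      = if y ∈ ⋃ l, Set.Icc (x l) (x' l) then 2 else 0 := by
  by_cases hmem : y ∈ ⋃ l, Set.Icc (x l) (x' l)
  · rw [if_pos hmem]
    obtain ⟨_, ⟨l₀, rfl⟩, hl₀⟩ := hmem
    obtain ⟨h1, h2⟩ := hl₀
    have h1' : x l₀ < y := lt_of_le_of_ne h1 (Ne.symm (hy l₀).1)
    have h2' : y < x' l₀ := lt_of_le_of_ne h2 (hy l₀).2
    rw [Finset.sum_eq_single l₀]
    · rw [Real.sign_of_pos (by linarith), Real.sign_of_neg (by linarith)]; ring
    · intro l _ hl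
      rcases lt_or_gt_of_ne hl with h | h
      · have : x' l < x l₀ := hchain l l₀ h
        have hx : x l < x' l := hxx' l
        rw [Real.sign_of_pos (by linarith), Real.sign_of_pos (by linarith)]; ring
      · have : x' l₀ < x l := hchain l₀ l h
        have hx : x l < x' l := hxx' l
        rw [Real.sign_of_neg (by linarith), Real.sign_of_neg (by linarith)]; ring
    · intro h; exact absurd (Finset.mem_univ l₀) h
  · rw [if_neg hmem]
    refine Finset.sum_eq_zero fun l _ => ?_
    have : y ∉ Set.Icc (x l) (x' l) := fun h => hmem (Set.mem_iUnion.2 ⟨l, h⟩)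
    rw [Set.mem_Icc, not_and_or, not_le, not_le] at this
    rcases this with h | h
    · rw [Real.sign_of_neg (by linarith), Real.sign_of_neg (by linarith [hxx' l])]; ring
    · rw [Real.sign_of_pos (by linarith [hxx' l]), Real.sign_of_pos (by linarith [hxx' l])]; ring

open scoped Classical in
lemma Afac_factor {m n : ℕ} (κ : ℝ) (x x' : Fin n → ℝ) (hxx' : ∀ j, x j < x' j)
    (hchain : ∀ j k : Fin n, j < k → x' j < x k) (z : Fin m → ℝ)
    (hz : ∀ i l, z i ≠ x l ∧ z i ≠ x' l) :
    Afac (-κ) (Fin.append z x') * Afac κ (Fin.append z x)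
      = (Afac (-κ) x' * Afac κ x) *
        ∏ i : Fin m, (1 + (-(1 - Complex.exp (Complex.I * Real.pi * κ))) *
          (if z i ∈ ⋃ l, Set.Icc (x l) (x' l) then (1:ℂ) else 0)) := by
  have key : ∀ i : Fin m, (1 + (-(1 - Complex.exp (Complex.I * Real.pi * κ))) *
      (if z i ∈ ⋃ l, Set.Icc (x l) (x' l) then (1:ℂ) else 0))
      = Complex.exp (Complex.I * Real.pi * κ *
          ((∑ l : Fin n, (Real.sign (z i - x l) - Real.sign (z i - x' l)) : ℝ) : ℂ) / 2) := by
    intro i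
    rw [sign_sum_eq x x' hxx' hchain (z i) (hz i)]
    by_cases h : z i ∈ ⋃ l, Set.Icc (x l) (x' l)
    · rw [if_pos h, if_pos h]
      have harg : Complex.I * Real.pi * κ * (((2:ℝ)) : ℂ) / 2 = Complex.I * Real.pi * κ := by
        push_cast; ring
      rw [harg]; ring
    · rw [if_neg h, if_neg h]
      norm_num
  simp only [key, Afac_eq, ← Complex.exp_sum, ← Complex.exp_add]
  congr 1
  rw [Ssum_append z x, Ssum_append z x']
  push_cast
  rw [← Finset.sum_div, ← Finset.mul_sum]
  simp only [Finset.sum_sub_distrib]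
  ring

lemma append_comp_perm {m n : ℕ} (σ : Equiv.Perm (Fin m)) (z : Fin m → ℝ) (x : Fin n → ℝ) :
    Fin.append z x ∘ (finSumFinEquiv.permCongr (Equiv.sumCongr σ (Equiv.refl (Fin n))))
      = Fin.append (z ∘ σ) x := by
  funext i
  rcases h : finSumFinEquiv.symm i with a | b
  · have hi : i = Fin.castAdd n a := by
      have := congrArg finSumFinEquiv h
      simpa [finSumFinEquiv_apply_left] using this
    subst hi
    simp [Equiv.permCongr_apply, h, finSumFinEquiv_apply_left, Fin.append_left]
  · have hi : i = Fin.natAdd m b := by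
      have := congrArg finSumFinEquiv h
      simpa [finSumFinEquiv_apply_right] using this
    subst hi
    simp [Equiv.permCongr_apply, h, finSumFinEquiv_apply_right, Fin.append_right]

lemma coord_null {m : ℕ} (i : Fin m) (a : ℝ) :
    volume {z : Fin m → ℝ | z i = a} = 0 := by
  classical
  have h : {z : Fin m → ℝ | z i = a}
      = Set.univ.pi (fun j => if j = i then ({a} : Set ℝ) else Set.univ) := by
    ext z
    simp only [Set.mem_setOf_eq, Set.mem_pi, Set.mem_univ, forall_true_left]
    constructor
    · intro hz j; split <;> simp_all
    · intro hz; have := hz i; simpa using this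
  rw [h, volume_pi_pi]
  refine Finset.prod_eq_zero (Finset.mem_univ i) ?_
  simp

set_option maxHeartbeats 1000000 in
/-- Anyon–Bose expansion of the `n`-particle reduced density matrix, ordering `O₊`
(`x₁ < x₁' < ⋯ < xₙ < xₙ'`, `I₊ = ⋃ₗ [xₗ, xₗ']`), with `N = m + n` particles on
`V = [-L/2, L/2]` and `χᵃ = A_κ χ` for a continuous totally symmetric `χ`. -/
theorem anyon_bose_rdm_plus (κ L : ℝ) (hL : 0 < L) (m n : ℕ) (hn : 1 ≤ n)
    (χ : (Fin (m + n) → ℝ) → ℂ) (hcont : Continuous χ)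
    (hsym : ∀ (π : Equiv.Perm (Fin (m + n))) (z : Fin (m + n) → ℝ), χ (z ∘ π) = χ z)
    (x x' : Fin n → ℝ)
    (hxV : ∀ j, x j ∈ Set.Icc (-(L / 2)) (L / 2))
    (hx'V : ∀ j, x' j ∈ Set.Icc (-(L / 2)) (L / 2))
    (hxx' : ∀ j, x j < x' j) (hchain : ∀ j k : Fin n, j < k → x' j < x k) :
    (∫ z in Set.univ.pi (fun _ : Fin m => Set.Icc (-(L / 2)) (L / 2)),
        (starRingEnd ℂ) (Afac κ (Fin.append z x') * χ (Fin.append z x')) *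
          (Afac κ (Fin.append z x) * χ (Fin.append z x)))
      = (Afac (-κ) x' * Afac κ x) *
          ∑ j ∈ Finset.range (m + 1),
            (-1) ^ j * (1 - Complex.exp (Complex.I * Real.pi * κ)) ^ j * (m.choose j : ℂ) *
              ∫ z in Set.univ.pi (fun i : Fin m =>
                  if (i : ℕ) < j then ⋃ l, Set.Icc (x l) (x' l)
                  else Set.Icc (-(L / 2)) (L / 2)),
                (starRingEnd ℂ) (χ (Fin.append z x')) * χ (Fin.append z x) := by
  classical
  set V : Set ℝ := Set.Icc (-(L / 2)) (L / 2) with hV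
  set I : Set ℝ := ⋃ l, Set.Icc (x l) (x' l) with hI
  set q : ℂ := Complex.exp (Complex.I * Real.pi * κ) with hq
  set c : ℂ := -(1 - q) with hc
  set f : (Fin m → ℝ) → ℂ :=
    fun z => (starRingEnd ℂ) (χ (Fin.append z x')) * χ (Fin.append z x) with hf
  set Vm : Set (Fin m → ℝ) := Set.univ.pi (fun _ : Fin m => V) with hVm
  have hImeas : MeasurableSet I := MeasurableSet.iUnion fun l => measurableSet_Icc
  have hVmeas : MeasurableSet Vm := MeasurableSet.univ_pi fun _ => measurableSet_Icc
  have hIV : I ⊆ V := by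
    refine Set.iUnion_subset fun l => Set.Icc_subset_Icc (hxV l).1 (hx'V l).2
  -- continuity of f
  have happcont : ∀ y : Fin n → ℝ, Continuous (fun z : Fin m → ℝ => Fin.append z y) := by
    intro y
    refine continuous_pi fun i => ?_
    refine Fin.addCases (fun a => ?_) (fun b => ?_) i
    · simpa [Fin.append_left] using continuous_apply a
    · simpa [Fin.append_right] using continuous_const
  have hfc : Continuous f := by
    exact ((Complex.continuous_conj.comp (hcont.comp (happcont x'))).mul
      (hcont.comp (happcont x)))
  have hVmc : IsCompact Vm := isCompact_univ_pi fun _ => isCompact_Icc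
  have hfi : IntegrableOn f Vm := hfc.continuousOn.integrableOn_compact hVmc
  -- indicator function
  set ind : ℝ → ℂ := fun y => if y ∈ I then (1:ℂ) else 0 with hind
  -- symmetry of f
  have hsymf : ∀ (σ : Equiv.Perm (Fin m)) (z : Fin m → ℝ), f (z ∘ σ) = f z := by
    intro σ z
    have h1 := append_comp_perm σ z x
    have h2 := append_comp_perm σ z x'
    simp only [hf]
    rw [← h1, ← h2, hsym, hsym]
  -- the per-subset integral
  set K : ℕ → ℂ := fun j =>
    ∫ z in Set.univ.pi (fun i : Fin m => if (i : ℕ) < j then I else V), f z with hK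
  -- Lemma A+B : for each subset t, the indicator integral equals K t.card
  have hJ : ∀ t : Finset (Fin m),
      (∫ z in Vm, (∏ i ∈ t, ind (z i)) * f z) = K t.card := by
    intro t
    -- Part A: indicator → restriction of the domain
    set B : Set (Fin m → ℝ) := Set.pi (↑t : Set (Fin m)) (fun _ => I) with hB
    have hBmeas : MeasurableSet B :=
      MeasurableSet.pi (Set.to_countable _) fun i _ => hImeas
    have hPind : ∀ z : Fin m → ℝ, (∏ i ∈ t, ind (z i)) * f z = Set.indicator B f z := by
      intro z
      by_cases hzB : z ∈ B
      · rw [Set.indicator_of_mem hzB]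
        have h1 : ∀ i ∈ t, ind (z i) = 1 := by
          intro i hi
          exact if_pos (hzB i hi)
        rw [Finset.prod_congr rfl h1]
        simp
      · rw [Set.indicator_of_notMem hzB]
        have : ∃ i ∈ t, z i ∉ I := by
          by_contra hcon
          push_neg at hcon
          exact hzB fun i hi => hcon i hi
        obtain ⟨i, hi, hzi⟩ := this
        have h0 : ind (z i) = 0 := if_neg hzi
        rw [Finset.prod_eq_zero hi h0]
        simp
    have hsets : B ∩ Vm = Set.univ.pi (fun i : Fin m => if i ∈ t then I else V) := by
      ext z
      simp only [hB, hVm, Set.mem_inter_iff, Set.mem_pi, Set.mem_univ, forall_true_left,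
        Finset.mem_coe]
      constructor
      · rintro ⟨h1, h2⟩ i
        by_cases hit : i ∈ t
        · rw [if_pos hit]; exact h1 i hit
        · rw [if_neg hit]; exact h2 i
      · intro h
        constructor
        · intro i hit
          have := h i; rwa [if_pos hit] at this
        · intro i
          have := h i
          by_cases hit : i ∈ t
          · rw [if_pos hit] at this; exact hIV this
          · rwa [if_neg hit] at this
    have hA : (∫ z in Vm, (∏ i ∈ t, ind (z i)) * f z)
        = ∫ z in Set.univ.pi (fun i : Fin m => if i ∈ t then I else V), f z := by
      simp only [hPind]
      rw [integral_indicator hBmeas, Measure.restrict_restrict hBmeas, hsets]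
    rw [hA]
    -- Part B: permutation invariance
    have hjm : t.card ≤ m := by simpa using Finset.card_le_univ t
    set u : Finset (Fin m) := Finset.univ.filter (fun i : Fin m => (i : ℕ) < t.card) with hu
    have humap : u = Finset.map (Fin.castLEEmb hjm) Finset.univ := by
      ext i
      simp only [hu, Finset.mem_filter, Finset.mem_univ, true_and, Finset.mem_map]
      constructor
      · intro h
        exact ⟨⟨(i : ℕ), h⟩, Fin.ext rfl⟩
      · rintro ⟨a, _, rfl⟩
        simpa using a.isLt
    have hucard : u.card = t.card := by
      rw [humap, Finset.card_map, Finset.card_univ, Fintype.card_fin]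
    have hcards : Fintype.card { i // i ∈ u } = Fintype.card { i // i ∈ t } := by
      simpa [Fintype.card_coe] using hucard
    set e : { i // i ∈ u } ≃ { i // i ∈ t } := Fintype.equivOfCardEq hcards with he
    set σ : Equiv.Perm (Fin m) := e.extendSubtype with hσ
    have hmemiff : ∀ i : Fin m, σ i ∈ t ↔ i ∈ u := by
      intro i
      by_cases hiu : i ∈ u
      · simp only [hiu, iff_true]
        exact e.extendSubtype_mem i hiu
      · simp only [hiu, iff_false]
        exact e.extendSubtype_not_mem i hiu
    set T : (Fin m → ℝ) ≃ᵐ (Fin m → ℝ) := MeasurableEquiv.piCongrLeft (fun _ : Fin m => ℝ) σ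
      with hT
    have hTapp : ∀ z : Fin m → ℝ, T z = z ∘ ⇑σ.symm := by
      intro z
      funext i
      have h1 : T z (σ (σ.symm i)) = z (σ.symm i) :=
        Equiv.piCongrLeft_apply_apply (fun _ => ℝ) σ z (σ.symm i)
      rw [Equiv.apply_symm_apply] at h1
      exact h1
    have hmp : MeasurePreserving T volume volume :=
      volume_measurePreserving_piCongrLeft (fun _ : Fin m => ℝ) σ
    have hkey := hmp.setIntegral_preimage_emb T.measurableEmbedding f
      (Set.univ.pi (fun i : Fin m => if i ∈ t then I else V))
    have hfT : ∀ z : Fin m → ℝ, f (T z) = f z := by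
      intro z
      rw [hTapp]
      exact hsymf σ.symm z
    have hpre : (⇑T) ⁻¹' (Set.univ.pi (fun i : Fin m => if i ∈ t then I else V))
        = Set.univ.pi (fun i : Fin m => if (i : ℕ) < t.card then I else V) := by
      ext z
      simp only [Set.mem_preimage, Set.mem_pi, Set.mem_univ, forall_true_left]
      have hTz : ∀ i, T z i = z (σ.symm i) := fun i => by rw [hTapp]; rfl
      constructor
      · intro h i
        have := h (σ i)
        rw [hTz, Equiv.symm_apply_apply] at this
        rcases hmemiff i with ⟨h1, h2⟩
        by_cases hiu : i ∈ u
        · rw [if_pos (Finset.mem_filter.mp hiu).2]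
          rwa [if_pos (h2 hiu)] at this
        · rw [if_neg (fun hlt => hiu (Finset.mem_filter.mpr ⟨Finset.mem_univ i, hlt⟩))]
          rwa [if_neg (fun hmem => hiu (h1 hmem))] at this
      · intro h i
        rw [hTz]
        have := h (σ.symm i)
        by_cases hit : i ∈ t
        · have hiu : σ.symm i ∈ u := by
            rw [← (hmemiff (σ.symm i))]
            rwa [Equiv.apply_symm_apply]
          have hlt : ((σ.symm i : Fin m) : ℕ) < t.card := (Finset.mem_filter.mp hiu).2
          rw [if_pos hit]
          rwa [if_pos hlt] at this
        · have hiu : σ.symm i ∉ u := by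
            rw [← (hmemiff (σ.symm i))]
            rwa [Equiv.apply_symm_apply]
          have hlt : ¬ ((σ.symm i : Fin m) : ℕ) < t.card :=
            fun hlt => hiu (Finset.mem_filter.mpr ⟨Finset.mem_univ _, hlt⟩)
          rw [if_neg hit]
          rwa [if_neg hlt] at this
    rw [hpre] at hkey
    simp only [hfT] at hkey
    rw [hK, ← hkey]
  -- a.e. rewriting of the integrand
  have hae : ∀ᵐ z : (Fin m → ℝ), ∀ i l, z i ≠ x l ∧ z i ≠ x' l := by
    have hnull : volume (⋃ i : Fin m, ⋃ l : Fin n,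
        ({z : Fin m → ℝ | z i = x l} ∪ {z : Fin m → ℝ | z i = x' l})) = 0 := by
      refine measure_iUnion_null fun i => measure_iUnion_null fun l =>
        measure_union_null (coord_null i (x l)) (coord_null i (x' l))
    have := (measure_eq_zero_iff_ae_notMem (μ := (volume : Measure (Fin m → ℝ)))).mp hnull
    filter_upwards [this] with z hz i l
    constructor
    · intro h
      exact hz (Set.mem_iUnion.2 ⟨i, Set.mem_iUnion.2 ⟨l, Or.inl h⟩⟩)
    · intro h
      exact hz (Set.mem_iUnion.2 ⟨i, Set.mem_iUnion.2 ⟨l, Or.inr h⟩⟩)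
  have hstep1 : (∫ z in Vm,
        (starRingEnd ℂ) (Afac κ (Fin.append z x') * χ (Fin.append z x')) *
          (Afac κ (Fin.append z x) * χ (Fin.append z x)))
      = ∫ z in Vm, (Afac (-κ) x' * Afac κ x) * ((∏ i : Fin m, (1 + c * ind (z i))) * f z) := by
    refine setIntegral_congr_ae hVmeas ?_
    filter_upwards [hae] with z hz _
    rw [map_mul, Afac_conj]
    have := Afac_factor κ x x' hxx' hchain z hz
    simp only [hind, hc, hq, hf, ← hI]
    calc Afac (-κ) (Fin.append z x') * (starRingEnd ℂ) (χ (Fin.append z x')) *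
          (Afac κ (Fin.append z x) * χ (Fin.append z x))
        = (Afac (-κ) (Fin.append z x') * Afac κ (Fin.append z x)) *
            ((starRingEnd ℂ) (χ (Fin.append z x')) * χ (Fin.append z x)) := by ring
      _ = _ := by rw [this]; ring
  rw [hstep1]
  rw [integral_const_mul]
  -- expand the product
  have hexp : ∀ z : Fin m → ℝ, (∏ i : Fin m, (1 + c * ind (z i)))
      = ∑ t ∈ (Finset.univ : Finset (Fin m)).powerset, c ^ t.card * ∏ i ∈ t, ind (z i) := by
    intro z
    have : ∀ i : Fin m, (1 + c * ind (z i)) = c * ind (z i) + 1 := fun i => by ring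
    simp only [this]
    rw [Finset.prod_add]
    refine Finset.sum_congr rfl fun t _ => ?_
    rw [Finset.prod_mul_distrib, Finset.prod_const]
    simp
  simp only [hexp, Finset.sum_mul]
  -- integrability of each summand
  have hint : ∀ t : Finset (Fin m),
      IntegrableOn (fun z => c ^ t.card * (∏ i ∈ t, ind (z i)) * f z) Vm := by
    intro t
    have hm : Measurable (fun z : Fin m → ℝ => c ^ t.card * ∏ i ∈ t, ind (z i)) := by
      refine Measurable.const_mul ?_ _
      refine Finset.measurable_prod _ fun i _ => ?_
      exact Measurable.ite ((measurable_pi_apply i) hImeas) measurable_const measurable_const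
    have hb : ∀ z : Fin m → ℝ, ‖c ^ t.card * ∏ i ∈ t, ind (z i)‖ ≤ ‖c ^ t.card‖ := by
      intro z
      rw [norm_mul]
      have : ‖∏ i ∈ t, ind (z i)‖ ≤ 1 := by
        rw [norm_prod]
        refine Finset.prod_le_one (fun i _ => norm_nonneg _) fun i _ => ?_
        simp only [hind]
        split <;> simp
      nlinarith [norm_nonneg (c ^ t.card)]
    have := hfi.bdd_mul (c := ‖c ^ t.card‖) hm.aestronglyMeasurable (Filter.Eventually.of_forall fun z => hb z)
    simpa [mul_assoc, IntegrableOn] using this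
  rw [integral_finset_sum _ (fun t _ => by simpa [mul_assoc, IntegrableOn] using hint t)]
  -- evaluate each term
  have hterm : ∀ t : Finset (Fin m),
      (∫ z in Vm, c ^ t.card * (∏ i ∈ t, ind (z i)) * f z) = c ^ t.card * K t.card := by
    intro t
    rw [show (fun z => c ^ t.card * (∏ i ∈ t, ind (z i)) * f z)
        = (fun z => c ^ t.card * ((∏ i ∈ t, ind (z i)) * f z)) from funext fun z => by ring]
    rw [integral_const_mul, hJ t]
  simp only [hterm]
  -- regroup by cardinality
  rw [Finset.sum_powerset_apply_card (fun j => c ^ j * K j)]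
  simp only [Finset.card_univ, Fintype.card_fin, nsmul_eq_mul]
  refine congrArg _ (Finset.sum_congr rfl fun j _ => ?_)
  have : c ^ j = (-1) ^ j * (1 - q) ^ j := by rw [hc]; rw [neg_pow]
  rw [this]
  ring
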